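/- If X and Y are independent generalized Poisson difference random variables with parameters (θ₁, θ₂, λ) and (θ₃, θ₄, λ), then X + Y is a generalized Poisson difference random variable with parameters (θ₁ + θ₃, θ₂ + θ₄, λ). -/

import Mathlib

open MeasureTheory ProbabilityTheory
open scoped ENNReal


noncomputable def abelP (z : ℝ) (m : ℕ) (x : ℝ) : ℝ :=
  if m = 0 then 1 else x * (x + m * z) ^ (m - 1)

lemma abelP_zero (z x : ℝ) : abelP z 0 x = 1 := rfl

lemma abelP_succ (z : ℝ) (m : ℕ) (x : ℝ) :
    abelP z (m + 1) x = x * (x + (m + 1) * z) ^ m := by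
  simp [abelP]

lemma abelP_at_zero (z : ℝ) (m : ℕ) (hm : m ≠ 0) : abelP z m 0 = 0 := by
  simp [abelP, hm]

lemma hasDerivAt_abelP (z : ℝ) (m : ℕ) (x : ℝ) :
    HasDerivAt (abelP z m) (m * abelP z (m - 1) (x + z)) x := by
  cases m with
  | zero => simpa [show abelP z 0 = fun _ => 1 from funext fun t => abelP_zero z t] using hasDerivAt_const x (1 : ℝ)
  | succ k =>
    have hid : HasDerivAt (fun x : ℝ => x) 1 x := hasDerivAt_id x
    have hpow : HasDerivAt (fun x : ℝ => (x + (k + 1) * z) ^ k)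
        ((k : ℝ) * (x + (k + 1) * z) ^ (k - 1) * 1) x := by
      exact (hid.add_const ((k + 1) * z)).pow k
    have h := hid.mul hpow
    have : HasDerivAt (abelP z (k + 1))
        (1 * (x + (k+1) * z) ^ k + x * ((k : ℝ) * (x + (k + 1) * z) ^ (k - 1) * 1)) x := by
      have hfun : abelP z (k + 1) = fun x : ℝ => x * (x + (k + 1) * z) ^ k := by
        funext t; exact abelP_succ z k t
      rw [hfun]
      simpa [mul_comm, Pi.mul_def] using h
    convert this using 1
    cases k with
    | zero => simp [abelP]
    | succ j =>
      rw [show (j + 1 + 1 : ℕ) - 1 = j + 1 from rfl, abelP_succ,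
        show (j + 1 : ℕ) - 1 = j from rfl, pow_succ]
      push_cast
      rw [show x + z + ((j : ℝ) + 1) * z = x + ((j : ℝ) + 1 + 1) * z by ring]
      ring

theorem abelP_add (z : ℝ) : ∀ (n : ℕ) (x y : ℝ),
    ∑ k ∈ Finset.range (n + 1), (n.choose k : ℝ) * abelP z k x * abelP z (n - k) y
      = abelP z n (x + y) := by
  intro n
  induction n with
  | zero => intro x y; simp [abelP]
  | succ n IH =>
    intro x
    set L : ℝ → ℝ := fun y => ∑ k ∈ Finset.range (n + 2),
      ((n+1).choose k : ℝ) * abelP z k x * abelP z (n + 1 - k) y with hL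
    set R : ℝ → ℝ := fun y => abelP z (n + 1) (x + y) with hR
    have hchoose : ∀ k ∈ Finset.range (n + 1),
        ((n + 1 - k : ℕ) : ℝ) * ((n+1).choose k : ℝ) = (n + 1 : ℝ) * (n.choose k : ℝ) := by
      intro k hk
      have hk' : k ≤ n := Finset.mem_range_succ_iff.mp hk
      have h1 : (n + 1 - k) * (n+1).choose k = (n+1) * n.choose k := by
        calc (n + 1 - k) * (n+1).choose k = (n+1).choose k * (n + 1 - k) := mul_comm _ _
          _ = n.choose k * (n + 1) := (Nat.choose_mul_succ_eq n k).symm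
          _ = (n + 1) * n.choose k := mul_comm _ _
      exact_mod_cast congrArg (fun t : ℕ => (t : ℝ)) h1
    have hLderiv : ∀ y, HasDerivAt L ((n + 1 : ℝ) * abelP z n (x + y + z)) y := by
      intro y
      have h : HasDerivAt L (∑ k ∈ Finset.range (n + 2),
          ((n+1).choose k : ℝ) * abelP z k x *
            (((n + 1 - k : ℕ) : ℝ) * abelP z (n + 1 - k - 1) (y + z))) y := by
        apply HasDerivAt.fun_sum
        intro k hk
        exact (hasDerivAt_abelP z (n + 1 - k) y).const_mul _
      convert h using 1
      rw [Finset.sum_range_succ]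
      have hlast : ((n+1).choose (n+1) : ℝ) * abelP z (n+1) x *
          (((n + 1 - (n+1) : ℕ) : ℝ) * abelP z (n + 1 - (n+1) - 1) (y + z)) = 0 := by
        simp
      rw [hlast, add_zero]
      have : ∀ k ∈ Finset.range (n + 1),
          ((n+1).choose k : ℝ) * abelP z k x *
            (((n + 1 - k : ℕ) : ℝ) * abelP z (n + 1 - k - 1) (y + z))
          = (n + 1 : ℝ) * ((n.choose k : ℝ) * abelP z k x * abelP z (n - k) (y + z)) := by
        intro k hk
        have hk' : k ≤ n := Finset.mem_range_succ_iff.mp hk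
        have hidx : n + 1 - k - 1 = n - k := by omega
        rw [hidx]
        have hc := hchoose k hk
        linear_combination (abelP z k x * abelP z (n - k) (y + z)) * hc
      rw [Finset.sum_congr rfl this, ← Finset.mul_sum, IH x (y + z)]
      ring_nf
    have hRderiv : ∀ y, HasDerivAt R ((n + 1 : ℝ) * abelP z n (x + y + z)) y := by
      intro y
      have hinner : HasDerivAt (fun y : ℝ => x + y) 1 y := by
        simpa using (hasDerivAt_id y).const_add x
      have houter := hasDerivAt_abelP z (n + 1) (x + y)
      have := HasDerivAt.comp y (by simpa using houter) hinner
      simpa [Nat.add_sub_cancel, Function.comp_def, hR] using this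
    have hg : ∀ y, L y = R y := by
      have hdiff : Differentiable ℝ (fun y => L y - R y) := by
        intro y
        exact (((hLderiv y).sub (hRderiv y)).differentiableAt)
      have hderiv0 : ∀ y, deriv (fun y => L y - R y) y = 0 := by
        intro y
        have := ((hLderiv y).sub (hRderiv y))
        simpa using (show deriv (fun y => L y - R y) y = _ from this.deriv)
      have hconst : ∀ y, (fun y => L y - R y) y = (fun y => L y - R y) 0 :=
        fun y => is_const_of_deriv_eq_zero hdiff hderiv0 y 0
      have hzero : L 0 - R 0 = 0 := by
        have hL0 : L 0 = abelP z (n + 1) x := by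
          rw [hL]
          simp only
          rw [Finset.sum_range_succ]
          have : ∀ k ∈ Finset.range (n + 1),
              ((n+1).choose k : ℝ) * abelP z k x * abelP z (n + 1 - k) 0 = 0 := by
            intro k hk
            have hk' : k ≤ n := Finset.mem_range_succ_iff.mp hk
            rw [abelP_at_zero z _ (by omega)]
            ring
          rw [Finset.sum_congr rfl this]
          simp [abelP_zero]
        have hR0 : R 0 = abelP z (n + 1) x := by simp [hR]
        rw [hL0, hR0, sub_self]
      intro y
      have := hconst y
      simp only at this
      linarith [this, hzero]
    intro y
    exact hg y



noncomputable def gpw (θ lam : ℝ) (n : ℕ) : ℝ :=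
  abelP lam n θ / n.factorial * Real.exp (-θ - n * lam)

lemma abelP_nonneg {θ lam : ℝ} (hθ : 0 < θ) (hl : 0 ≤ lam) (n : ℕ) :
    0 ≤ abelP lam n θ := by
  unfold abelP
  split
  · norm_num
  · positivity

lemma abelP_le {θ lam : ℝ} (hθ : 0 < θ) (hl : 0 ≤ lam) (n : ℕ) :
    abelP lam n θ ≤ (θ + n * lam) ^ n := by
  unfold abelP
  split
  · next h => subst h; simp
  · next h =>
    obtain ⟨m, rfl⟩ : ∃ m, n = m + 1 := ⟨n - 1, by omega⟩
    rw [Nat.add_sub_cancel, pow_succ]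
    have hb : (0:ℝ) ≤ θ + (m+1) * lam := by positivity
    have : θ ≤ θ + ((m:ℝ)+1) * lam := by nlinarith
    calc θ * (θ + (↑(m+1)) * lam) ^ m ≤ (θ + (↑(m+1)) * lam) * (θ + (↑(m+1)) * lam) ^ m := by
          apply mul_le_mul_of_nonneg_right _ (by positivity)
          push_cast; linarith
      _ = (θ + (↑(m+1)) * lam) ^ (m+1) := by ring
      _ = (θ + (↑(m+1)) * lam) ^ m * (θ + (↑(m+1)) * lam) := by ring

lemma gpw_nonneg {θ lam : ℝ} (hθ : 0 < θ) (hl : 0 ≤ lam) (n : ℕ) :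
    0 ≤ gpw θ lam n := by
  unfold gpw
  have := abelP_nonneg hθ hl n
  positivity

lemma gpw_conv {θ1 θ3 lam : ℝ} (n : ℕ) :
    ∑ k ∈ Finset.range (n + 1), gpw θ1 lam k * gpw θ3 lam (n - k)
      = gpw (θ1 + θ3) lam n := by
  have hstep : ∀ k ∈ Finset.range (n + 1),
      gpw θ1 lam k * gpw θ3 lam (n - k)
        = ((n.choose k : ℝ) * abelP lam k θ1 * abelP lam (n - k) θ3) / n.factorial
            * Real.exp (-(θ1 + θ3) - n * lam) := by
    intro k hk
    have hk' : k ≤ n := Finset.mem_range_succ_iff.mp hk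
    unfold gpw
    have hcast : ((n - k : ℕ) : ℝ) = (n : ℝ) - k := by
      have : (k : ℝ) ≤ n := by exact_mod_cast hk'
      push_cast [Nat.cast_sub hk']; ring
    have hexp : Real.exp (-θ1 - k * lam) * Real.exp (-θ3 - ((n - k : ℕ) : ℝ) * lam)
        = Real.exp (-(θ1 + θ3) - n * lam) := by
      rw [← Real.exp_add, hcast]; ring_nf
    have hfact : (n.choose k : ℝ) * ((k.factorial : ℝ) * ((n - k).factorial : ℝ))
        = (n.factorial : ℝ) := by
      rw [← mul_assoc]
      exact_mod_cast Nat.choose_mul_factorial_mul_factorial hk'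
    have hk0 : (0:ℝ) < k.factorial := by exact_mod_cast k.factorial_pos
    have hnk0 : (0:ℝ) < (n - k).factorial := by exact_mod_cast (n - k).factorial_pos
    have hn0 : (0:ℝ) < n.factorial := by exact_mod_cast n.factorial_pos
    have hC0 : ((n.choose k : ℕ) : ℝ) ≠ 0 := by
      exact Nat.cast_ne_zero.mpr (Nat.choose_pos hk').ne'
    rw [← hexp, ← hfact]
    field_simp
  rw [Finset.sum_congr rfl hstep]
  simp only [div_mul_eq_mul_div]
  rw [← Finset.sum_div, ← Finset.sum_mul, abelP_add lam n θ1 θ3]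
  unfold gpw
  ring

lemma gpw_bound {θ lam : ℝ} (hθ : 0 < θ) (hl : 0 ≤ lam) (n : ℕ) (hn : 1 ≤ n) :
    gpw θ lam n ≤ ((θ / n + lam) * Real.exp (1 - lam)) ^ n := by
  have hn0 : (0:ℝ) < n := by exact_mod_cast hn
  have hA : (0:ℝ) ≤ (θ + n * lam) ^ n := by positivity
  have h1 : abelP lam n θ ≤ (θ + n * lam) ^ n := abelP_le hθ hl n
  have h2 : Real.exp (-θ - n * lam) ≤ Real.exp (-(n * lam)) :=
    Real.exp_le_exp.mpr (by linarith)
  have h3 : ((n:ℝ)) ^ n / n.factorial ≤ Real.exp n :=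
    Real.pow_div_factorial_le_exp (x := (n:ℝ)) (by positivity) n
  have hfac : (0:ℝ) < n.factorial := by exact_mod_cast n.factorial_pos
  have hfac' : (1:ℝ) / n.factorial ≤ Real.exp n / (n:ℝ)^n := by
    rw [div_le_div_iff₀ hfac (by positivity)]
    calc (1:ℝ) * (n:ℝ)^n = (n:ℝ)^n := by ring
      _ ≤ Real.exp n * n.factorial := by
          rw [div_le_iff₀ hfac] at h3; linarith
    
  have key : gpw θ lam n ≤ (θ + n*lam)^n * (Real.exp n / (n:ℝ)^n) * Real.exp (-(n*lam)) := by
    unfold gpw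
    have e1 : abelP lam n θ / n.factorial ≤ (θ + n*lam)^n * (Real.exp n / (n:ℝ)^n) := by
      calc abelP lam n θ / n.factorial ≤ (θ + n*lam)^n / n.factorial := by
            gcongr
        _ = (θ + n*lam)^n * (1 / n.factorial) := by ring
        _ ≤ (θ + n*lam)^n * (Real.exp n / (n:ℝ)^n) := by
            apply mul_le_mul_of_nonneg_left hfac' hA
    calc abelP lam n θ / n.factorial * Real.exp (-θ - n*lam)
        ≤ ((θ + n*lam)^n * (Real.exp n / (n:ℝ)^n)) * Real.exp (-θ - n*lam) := by
          apply mul_le_mul_of_nonneg_right e1 (Real.exp_nonneg _)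
      _ ≤ ((θ + n*lam)^n * (Real.exp n / (n:ℝ)^n)) * Real.exp (-(n*lam)) := by
          apply mul_le_mul_of_nonneg_left h2 (by positivity)
  calc gpw θ lam n ≤ (θ + n*lam)^n * (Real.exp n / (n:ℝ)^n) * Real.exp (-(n*lam)) := key
    _ = ((θ / n + lam) * Real.exp (1 - lam)) ^ n := by
        have e1 : (θ / n + lam : ℝ) = (θ + n * lam) / n := by field_simp
        have e2 : Real.exp ((n:ℝ) * (1 - lam)) = Real.exp n * Real.exp (-((n:ℝ) * lam)) := by
          rw [← Real.exp_add]; ring_nf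
        rw [mul_pow, e1, div_pow, ← Real.exp_nat_mul, e2]
        ring

lemma lam_exp_lt_one {lam : ℝ} (hl0 : 0 ≤ lam) (hl1 : lam < 1) :
    lam * Real.exp (1 - lam) < 1 := by
  rcases eq_or_lt_of_le hl0 with h | h
  · rw [← h]; simp
  · have hlog : Real.log lam < lam - 1 := Real.log_lt_sub_one_of_pos h (ne_of_lt hl1)
    have : lam * Real.exp (1 - lam) = Real.exp (Real.log lam + (1 - lam)) := by
      rw [Real.exp_add, Real.exp_log h]
    rw [this]
    have h2 : Real.exp (Real.log lam + (1 - lam)) < Real.exp 0 :=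
      Real.exp_lt_exp.mpr (by linarith)
    rw [Real.exp_zero] at h2
    exact h2

set_option maxHeartbeats 1000000 in
lemma summable_gpw {θ lam : ℝ} (hθ : 0 < θ) (hl0 : 0 ≤ lam) (hl1 : lam < 1) :
    Summable (gpw θ lam) := by
  have hE : (0:ℝ) < Real.exp (1 - lam) := Real.exp_pos _
  set r : ℝ := (1 + lam * Real.exp (1 - lam)) / 2 with hr
  have hlt := lam_exp_lt_one hl0 hl1
  have hr1 : r < 1 := by rw [hr]; linarith
  have hr0 : 0 < r := by
    have : 0 ≤ lam * Real.exp (1 - lam) := by positivity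
    rw [hr]; linarith
  set ε : ℝ := (1 - lam * Real.exp (1 - lam)) / (2 * Real.exp (1 - lam)) with hε
  have hε0 : 0 < ε := by
    apply div_pos (by linarith) (by positivity)
  set N : ℕ := ⌈θ / ε⌉₊ + 1 with hN
  have hbig : ∀ n : ℕ, N ≤ n → gpw θ lam n ≤ r ^ n := by
    intro n hn
    have hn1 : 1 ≤ n := le_trans (by omega) hn
    have hn0 : (0:ℝ) < n := by exact_mod_cast hn1
    have hθn : θ / n ≤ ε := by
      rw [div_le_iff₀ hn0]
      have h1 : θ / ε ≤ ⌈θ / ε⌉₊ := Nat.le_ceil _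
      have h2 : ((⌈θ / ε⌉₊ : ℝ)) ≤ ((N:ℝ)) := by rw [hN]; push_cast; linarith
      have h3 : ((N:ℝ)) ≤ n := by exact_mod_cast hn
      have : θ / ε ≤ (n:ℝ) := by linarith
      calc θ = (θ / ε) * ε := by field_simp
        _ ≤ (n:ℝ) * ε := by apply mul_le_mul_of_nonneg_right this (le_of_lt hε0)
        _ = ε * n := by ring
    have hbase : (θ / n + lam) * Real.exp (1 - lam) ≤ r := by
      have : (θ / n + lam) * Real.exp (1 - lam) ≤ (ε + lam) * Real.exp (1 - lam) := by
        apply mul_le_mul_of_nonneg_right (by linarith) (le_of_lt hE)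
      calc (θ / n + lam) * Real.exp (1 - lam) ≤ (ε + lam) * Real.exp (1 - lam) := this
        _ = ε * Real.exp (1 - lam) + lam * Real.exp (1 - lam) := by ring
        _ = (1 - lam * Real.exp (1 - lam)) / 2 + lam * Real.exp (1 - lam) := by
            rw [hε]; field_simp
        _ = r := by rw [hr]; ring
    calc gpw θ lam n ≤ ((θ / n + lam) * Real.exp (1 - lam)) ^ n := gpw_bound hθ hl0 n hn1
      _ ≤ r ^ n := by
          apply pow_le_pow_left₀ (by positivity) hbase
  rw [← summable_nat_add_iff N]
  refine Summable.of_nonneg_of_le (fun n => gpw_nonneg hθ hl0 _) (fun n => ?_)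
    (summable_geometric_of_lt_one (le_of_lt hr0) hr1)
  calc gpw θ lam (n + N) ≤ r ^ (n + N) := hbig (n + N) (by omega)
    _ ≤ r ^ n := pow_le_pow_of_le_one (le_of_lt hr0) (le_of_lt hr1) (by omega)

/-- The generalized Poisson difference pmf `GPD(θ₁, θ₂, λ)`:
`P(Z = z) = e^{-θ₁-θ₂-zλ} ∑_{s ≥ max(0,-z)} [θ₂(θ₂+sλ)^{s-1}/s!]·[θ₁(θ₁+(s+z)λ)^{s+z-1}/(s+z)!]·e^{-2sλ}`. -/
noncomputable def gpdPmf (θ1 θ2 lam : ℝ) (z : ℤ) : ℝ :=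
  Real.exp (-θ1 - θ2 - z * lam) *
    ∑' s : ℕ, if 0 ≤ (s : ℤ) + z then
      (θ2 * (θ2 + s * lam) ^ ((s : ℝ) - 1) / (Nat.factorial s)) *
      (θ1 * (θ1 + ((s : ℝ) + (z : ℝ)) * lam) ^ (((s : ℝ) + (z : ℝ)) - 1) /
        (Nat.factorial ((s : ℤ) + z).toNat)) *
      Real.exp (-2 * s * lam)
    else 0



noncomputable def zw (θ lam : ℝ) (k : ℤ) : ℝ≥0∞ :=
  if 0 ≤ k then ENNReal.ofReal (gpw θ lam k.toNat) else 0

noncomputable def Ew (u v : ℤ → ℝ≥0∞) (z : ℤ) : ℝ≥0∞ := ∑' s : ℤ, u (s + z) * v s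

lemma zw_neg {θ lam : ℝ} {k : ℤ} (hk : k < 0) : zw θ lam k = 0 := by
  simp [zw, not_le.mpr hk]

lemma tsum_int_of_neg_zero {f : ℤ → ℝ≥0∞} (h : ∀ k : ℤ, k < 0 → f k = 0) :
    ∑' k : ℤ, f k = ∑' n : ℕ, f n := by
  symm
  apply Function.Injective.tsum_eq (g := fun n : ℕ => (n : ℤ))
  · exact fun a b hab => by simpa using hab
  · intro x hx
    rcases lt_or_ge x 0 with h0 | h0
    · exact absurd (h x h0) hx
    · exact ⟨x.toNat, by simpa using Int.toNat_of_nonneg h0⟩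

lemma zw_conv {θ1 θ3 lam : ℝ} (h1 : 0 < θ1) (h3 : 0 < θ3) (hl0 : 0 ≤ lam) (m : ℤ) :
    ∑' k : ℤ, zw θ1 lam k * zw θ3 lam (m - k) = zw (θ1 + θ3) lam m := by
  rcases lt_or_ge m 0 with hm | hm
  · rw [zw_neg hm]
    convert tsum_zero with k
    rcases lt_or_ge k 0 with hk | hk
    · rw [zw_neg hk, zero_mul]
    · rw [zw_neg (by omega : m - k < 0), mul_zero]
  · set M : ℕ := m.toNat with hMdef
    have hM : (M : ℤ) = m := Int.toNat_of_nonneg hm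
    have hsupp : ∀ k : ℤ,
        k ∉ (Finset.range (M + 1)).map ⟨(fun n : ℕ => (n : ℤ)), fun a b hab => by simpa using hab⟩ →
        zw θ1 lam k * zw θ3 lam (m - k) = 0 := by
      intro k hk
      rcases lt_or_ge k 0 with h0 | h0
      · rw [zw_neg h0, zero_mul]
      · rcases lt_or_ge m k with h2 | h2
        · rw [zw_neg (by omega : m - k < 0), mul_zero]
        · exfalso
          apply hk
          simp only [Finset.mem_map, Finset.mem_range, Function.Embedding.coeFn_mk]
          exact ⟨k.toNat, by omega, show ((k.toNat : ℕ) : ℤ) = k by omega⟩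
    rw [tsum_eq_sum hsupp, Finset.sum_map]
    show ∑ k ∈ Finset.range (M + 1), zw θ1 lam ((k : ℕ) : ℤ) * zw θ3 lam (m - (k : ℕ)) = _
    have hterm : ∀ k ∈ Finset.range (M + 1),
        zw θ1 lam ((k : ℕ) : ℤ) * zw θ3 lam (m - (k : ℕ))
          = ENNReal.ofReal (gpw θ1 lam k * gpw θ3 lam (M - k)) := by
      intro k hk
      have hkM : k ≤ M := Finset.mem_range_succ_iff.mp hk
      have e1 : zw θ1 lam ((k : ℕ) : ℤ) = ENNReal.ofReal (gpw θ1 lam k) := by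
        rw [zw, if_pos (by positivity)]
        have hh : ((k : ℤ)).toNat = k := by omega
        rw [hh]
      have e2 : zw θ3 lam (m - (k : ℕ)) = ENNReal.ofReal (gpw θ3 lam (M - k)) := by
        rw [zw, if_pos (by omega)]
        have hh : ((m - (k : ℕ) : ℤ)).toNat = M - k := by omega
        rw [hh]
      rw [e1, e2, ← ENNReal.ofReal_mul (gpw_nonneg h1 hl0 k)]
    rw [Finset.sum_congr rfl hterm,
      ← ENNReal.ofReal_sum_of_nonneg (fun k hk => by
        exact mul_nonneg (gpw_nonneg h1 hl0 _) (gpw_nonneg h3 hl0 _)),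
      gpw_conv M]
    rw [zw, if_pos hm, ← hMdef]

section grand
variable (u1 u2 u3 u4 : ℤ → ℝ≥0∞)

def tripleEquiv : (ℤ × ℤ × ℤ) ≃ (ℤ × ℤ × ℤ) where
  toFun p := (p.2.1 + p.2.2, p.2.1 + p.1, p.2.1)
  invFun q := (q.2.1 - q.2.2, q.2.2, q.1 - q.2.2)
  left_inv p := by
    obtain ⟨x, n, m⟩ := p
    show ((n + x) - n, n, (n + m) - n) = (x, n, m)
    rw [show n + x - n = x by ring, show n + m - n = m by ring]
  right_inv q := by
    obtain ⟨s, k, j⟩ := q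
    show (j + (s - j), j + (k - j), j) = (s, k, j)
    rw [show j + (s - j) = s by ring, show j + (k - j) = k by ring]

lemma grand (z : ℤ) :
    ∑' x : ℤ, Ew u1 u2 x * Ew u3 u4 (z - x)
      = Ew (fun m => ∑' k : ℤ, u1 k * u3 (m - k)) (fun m => ∑' k : ℤ, u2 k * u4 (m - k)) z := by
  have lhs_expand : ∀ x : ℤ, Ew u1 u2 x * Ew u3 u4 (z - x)
      = ∑' n : ℤ, ∑' m : ℤ, (u1 (n + x) * u2 n) * (u3 (m + (z - x)) * u4 m) := by
    intro x
    rw [Ew, Ew, ← ENNReal.tsum_mul_right]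
    exact tsum_congr fun n => (ENNReal.tsum_mul_left).symm
  have rhs_expand : Ew (fun m => ∑' k : ℤ, u1 k * u3 (m - k))
      (fun m => ∑' k : ℤ, u2 k * u4 (m - k)) z
      = ∑' s : ℤ, ∑' k : ℤ, ∑' j : ℤ, (u1 k * u3 (s + z - k)) * (u2 j * u4 (s - j)) := by
    rw [Ew]
    refine tsum_congr fun s => ?_
    rw [← ENNReal.tsum_mul_right]
    exact tsum_congr fun k => (ENNReal.tsum_mul_left).symm
  rw [rhs_expand]
  simp only [lhs_expand]
  set F : ℤ × ℤ × ℤ → ℝ≥0∞ :=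
    fun q => (u1 q.2.1 * u3 (q.1 + z - q.2.1)) * (u2 q.2.2 * u4 (q.1 - q.2.2)) with hF
  set G : ℤ × ℤ × ℤ → ℝ≥0∞ :=
    fun p => (u1 (p.2.1 + p.1) * u2 p.2.1) * (u3 (p.2.2 + (z - p.1)) * u4 p.2.2) with hG
  have hL : ∑' x : ℤ, ∑' n : ℤ, ∑' m : ℤ, (u1 (n + x) * u2 n) * (u3 (m + (z - x)) * u4 m)
      = ∑' p : ℤ × ℤ × ℤ, G p := by
    rw [ENNReal.tsum_prod' (f := G)]
    refine tsum_congr fun x => ?_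
    rw [ENNReal.tsum_prod' (f := fun q : ℤ × ℤ => G (x, q))]
  have hR : ∑' s : ℤ, ∑' k : ℤ, ∑' j : ℤ, (u1 k * u3 (s + z - k)) * (u2 j * u4 (s - j))
      = ∑' q : ℤ × ℤ × ℤ, F q := by
    rw [ENNReal.tsum_prod' (f := F)]
    refine tsum_congr fun s => ?_
    rw [ENNReal.tsum_prod' (f := fun q : ℤ × ℤ => F (s, q))]
  rw [hL, hR, ← Equiv.tsum_eq tripleEquiv F]
  refine tsum_congr fun p => ?_
  obtain ⟨x, n, m⟩ := p
  show G (x, n, m) = F (n + m, n + x, n)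
  rw [hF, hG]
  simp only
  rw [show n + m + z - (n + x) = m + (z - x) by ring, show n + m - n = m by ring]
  ring
end grand


lemma gpw_def (θ lam : ℝ) (n : ℕ) :
    gpw θ lam n = abelP lam n θ / n.factorial * Real.exp (-θ - n * lam) := rfl

noncomputable def fgp (θa θb lam : ℝ) (z : ℤ) (s : ℕ) : ℝ :=
  if 0 ≤ (s : ℤ) + z then gpw θa lam ((s : ℤ) + z).toNat * gpw θb lam s else 0

lemma rpow_abelP {θ lam : ℝ} (hθ : 0 < θ) (m : ℕ) :
    θ * (θ + m * lam) ^ ((m : ℝ) - 1) = abelP lam m θ := by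
  cases m with
  | zero =>
    simp only [Nat.cast_zero, zero_mul, add_zero, zero_sub, abelP, if_pos rfl]
    rw [Real.rpow_neg_one]
    exact mul_inv_cancel₀ (ne_of_gt hθ)
  | succ k =>
    rw [abelP_succ]
    have h1 : ((k + 1 : ℕ) : ℝ) - 1 = ((k : ℕ) : ℝ) := by push_cast; ring
    rw [h1, Real.rpow_natCast]
    push_cast
    ring

lemma gpdPmf_eq_tsum {θa θb lam : ℝ} (ha : 0 < θa) (hb : 0 < θb) (z : ℤ) :
    gpdPmf θa θb lam z = ∑' s : ℕ, fgp θa θb lam z s := by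
  rw [gpdPmf, ← tsum_mul_left]
  refine tsum_congr fun s => ?_
  by_cases h : 0 ≤ (s : ℤ) + z
  · rw [if_pos h, fgp, if_pos h]
    set m : ℕ := ((s : ℤ) + z).toNat with hmdef
    have hm : ((m : ℕ) : ℤ) = (s : ℤ) + z := Int.toNat_of_nonneg h
    have hmr : ((m : ℕ) : ℝ) = (s : ℝ) + (z : ℝ) := by exact_mod_cast hm
    rw [← hmr, rpow_abelP ha m, rpow_abelP hb s, gpw_def, gpw_def]
    have hexp : Real.exp (-θa - θb - (z : ℝ) * lam) * Real.exp (-2 * (s : ℝ) * lam)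
        = Real.exp (-θa - (m : ℝ) * lam) * Real.exp (-θb - (s : ℝ) * lam) := by
      rw [← Real.exp_add, ← Real.exp_add]
      congr 1
      have hz : (z : ℝ) = (m : ℝ) - (s : ℝ) := by rw [hmr]; ring
      rw [hz]; ring
    linear_combination (abelP lam s θb / (s.factorial : ℝ)) * (abelP lam m θa / (m.factorial : ℝ)) * hexp
  · rw [if_neg h, fgp, if_neg h, mul_zero]

lemma fgp_nonneg {θa θb lam : ℝ} (ha : 0 < θa) (hb : 0 < θb) (hl0 : 0 ≤ lam) (z : ℤ) (s : ℕ) :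
    0 ≤ fgp θa θb lam z s := by
  rw [fgp]; split
  · exact mul_nonneg (gpw_nonneg ha hl0 _) (gpw_nonneg hb hl0 _)
  · exact le_refl 0

lemma summable_fgp {θa θb lam : ℝ} (ha : 0 < θa) (hb : 0 < θb) (hl0 : 0 ≤ lam) (hl1 : lam < 1)
    (z : ℤ) : Summable (fgp θa θb lam z) := by
  set K : ℝ := ∑' n, gpw θa lam n with hK
  have hKb : ∀ m : ℕ, gpw θa lam m ≤ K :=
    fun m => Summable.le_tsum (summable_gpw ha hl0 hl1) m (fun j _ => gpw_nonneg ha hl0 j)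
  have hK0 : 0 ≤ K := le_trans (gpw_nonneg ha hl0 0) (hKb 0)
  refine Summable.of_nonneg_of_le (fgp_nonneg ha hb hl0 z) (fun s => ?_)
    ((summable_gpw hb hl0 hl1).mul_left K)
  rw [fgp]; split
  · exact mul_le_mul_of_nonneg_right (hKb _) (gpw_nonneg hb hl0 _)
  · exact mul_nonneg hK0 (gpw_nonneg hb hl0 _)

lemma ofReal_gpdPmf {θa θb lam : ℝ} (ha : 0 < θa) (hb : 0 < θb) (hl0 : 0 ≤ lam) (hl1 : lam < 1)
    (z : ℤ) : ENNReal.ofReal (gpdPmf θa θb lam z) = Ew (zw θa lam) (zw θb lam) z := by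
  rw [gpdPmf_eq_tsum ha hb z,
    ENNReal.ofReal_tsum_of_nonneg (fgp_nonneg ha hb hl0 z) (summable_fgp ha hb hl0 hl1 z)]
  rw [Ew, tsum_int_of_neg_zero (fun k hk => by rw [zw_neg hk, mul_zero])]
  refine (tsum_congr fun s => ?_).symm
  by_cases h : 0 ≤ (s : ℤ) + z
  · have e1 : zw θa lam ((s : ℤ) + z) = ENNReal.ofReal (gpw θa lam ((s : ℤ) + z).toNat) := by
      rw [zw, if_pos h]
    have e2 : zw θb lam ((s : ℕ) : ℤ) = ENNReal.ofReal (gpw θb lam s) := by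
      rw [zw, if_pos (by positivity : (0:ℤ) ≤ ((s : ℕ) : ℤ))]
      have hh : ((s : ℕ) : ℤ).toNat = s := by omega
      rw [hh]
    rw [fgp, if_pos h, ENNReal.ofReal_mul (gpw_nonneg ha hl0 _), e1, e2]
  · rw [fgp, if_neg h, zw_neg (by omega : (s : ℤ) + z < 0), zero_mul, ENNReal.ofReal_zero]

lemma measure_add_eq {Ω : Type*} [MeasurableSpace Ω] (P : Measure Ω)
    (X Y : Ω → ℤ) (hXm : Measurable X) (hYm : Measurable Y)
    (hindep : IndepFun X Y P) (z : ℤ) :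
    P {ω | X ω + Y ω = z} = ∑' x : ℤ, P {ω | X ω = x} * P {ω | Y ω = z - x} := by
  have hset : {ω | X ω + Y ω = z} = ⋃ x : ℤ, ({ω | X ω = x} ∩ {ω | Y ω = z - x}) := by
    ext ω
    simp only [Set.mem_setOf_eq, Set.mem_iUnion, Set.mem_inter_iff]
    constructor
    · intro h; exact ⟨X ω, rfl, by omega⟩
    · rintro ⟨x, h1, h2⟩; omega
  rw [hset, measure_iUnion ?_ ?_]
  · refine tsum_congr fun x => ?_
    exact hindep.measure_inter_preimage_eq_mul {x} {z - x}
      (measurableSet_singleton x) (measurableSet_singleton _)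
  · intro a b hab
    simp only [Function.onFun]
    apply Set.disjoint_left.mpr
    rintro ω ⟨h1, _⟩ ⟨h3, _⟩
    exact hab (h1 ▸ h3 ▸ rfl)
  · intro x
    exact (hXm (measurableSet_singleton x)).inter (hYm (measurableSet_singleton _))

/-- `Z` follows a generalized Poisson difference distribution `GPD(θ₁, θ₂, λ)` under `P`,
i.e. `Z` is distributed as the difference of two independent `GP(θ₁, λ)` and `GP(θ₂, λ)`
random variables. -/
def HasGPD {Ω : Type*} [MeasurableSpace Ω] (P : Measure Ω) (Z : Ω → ℤ) (θ1 θ2 lam : ℝ) : Prop :=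
  ∀ z : ℤ, P {ω | Z ω = z} = ENNReal.ofReal (gpdPmf θ1 θ2 lam z)

/-- Convolution property of the GPD: the sum of two independent generalized Poisson
difference random variables with parameters `(θ₁, θ₂, λ)` and `(θ₃, θ₄, λ)` is a
generalized Poisson difference random variable with parameters `(θ₁+θ₃, θ₂+θ₄, λ)`. -/
theorem gpd_convolution_add {Ω : Type*} [MeasurableSpace Ω] (P : Measure Ω)
    [IsProbabilityMeasure P] (X Y : Ω → ℤ) (θ1 θ2 θ3 θ4 lam : ℝ)
    (hθ1 : 0 < θ1) (hθ2 : 0 < θ2) (hθ3 : 0 < θ3) (hθ4 : 0 < θ4)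
    (hlam0 : 0 ≤ lam) (hlam1 : lam < 1)
    (hXm : Measurable X) (hYm : Measurable Y)
    (hX : HasGPD P X θ1 θ2 lam) (hY : HasGPD P Y θ3 θ4 lam)
    (hindep : IndepFun X Y P) :
    HasGPD P (fun ω => X ω + Y ω) (θ1 + θ3) (θ2 + θ4) lam := by
  intro z
  show P {ω | X ω + Y ω = z} = ENNReal.ofReal (gpdPmf (θ1 + θ3) (θ2 + θ4) lam z)
  calc P {ω | X ω + Y ω = z}
      = ∑' x : ℤ, P {ω | X ω = x} * P {ω | Y ω = z - x} :=
        measure_add_eq P X Y hXm hYm hindep z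
    _ = ∑' x : ℤ, Ew (zw θ1 lam) (zw θ2 lam) x * Ew (zw θ3 lam) (zw θ4 lam) (z - x) := by
        refine tsum_congr fun x => ?_
        rw [hX x, hY (z - x), ofReal_gpdPmf hθ1 hθ2 hlam0 hlam1 x,
          ofReal_gpdPmf hθ3 hθ4 hlam0 hlam1 (z - x)]
    _ = Ew (fun m => ∑' k : ℤ, zw θ1 lam k * zw θ3 lam (m - k))
          (fun m => ∑' k : ℤ, zw θ2 lam k * zw θ4 lam (m - k)) z :=
        grand (zw θ1 lam) (zw θ2 lam) (zw θ3 lam) (zw θ4 lam) z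
    _ = Ew (zw (θ1 + θ3) lam) (zw (θ2 + θ4) lam) z := by
        rw [Ew, Ew]
        exact tsum_congr fun s => by
          rw [zw_conv hθ1 hθ3 hlam0, zw_conv hθ2 hθ4 hlam0]
    _ = ENNReal.ofReal (gpdPmf (θ1 + θ3) (θ2 + θ4) lam z) :=
        (ofReal_gpdPmf (by linarith) (by linarith) hlam0 hlam1 z).symm
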